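/- (Laurent property for Somos 4 sequences.) Let K be the field of fractions of the polynomial ring ℤ[a, b, x₁, x₂, x₃, x₄] in six indeterminates, and let A : ℤ → K be a Somos 4 sequence over K with coefficients α = a, β = b and with A(1) = x₁, A(2) = x₂, A(3) = x₃, A(4) = x₄. Then for every n ∈ ℤ, A(n) lies in the subring of K generated by a, b, x₁, x₂, x₃, x₄ and the inverses x₁⁻¹, x₂⁻¹, x₃⁻¹, x₄⁻¹; that is, every term is a Laurent polynomial in the initial data with coefficients in ℤ[a, b]. -/

import Mathlib

set_option maxHeartbeats 2000000
set_option synthInstance.maxHeartbeats 1000000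
open MvPolynomial
noncomputable section Somos4Aux
abbrev sRng : Type := MvPolynomial (Fin 6) ℤ
abbrev sKK : Type := FractionRing sRng
def sff : sRng := X 2 * X 3 * X 4 * X 5
abbrev sLL : Type := Localization.Away sff
def sφ : sRng →+* sLL := algebraMap sRng sLL
def sχ : sRng →+* sKK := algebraMap sRng sKK
lemma sff_ne : sff ≠ 0 := by simp [sff, X_ne_zero, mul_ne_zero]


lemma sχ_inj : Function.Injective sχ := IsFractionRing.injective sRng sKK

lemma sχ_units : ∀ s : Submonoid.powers sff, IsUnit (sχ s) := by
  rintro ⟨s, k, rfl⟩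
  refine isUnit_iff_ne_zero.mpr ?_
  simp only [map_pow]
  exact pow_ne_zero _ (fun h => sff_ne (sχ_inj (by simpa using h)))

def sψ : sLL →+* sKK := IsLocalization.lift (M := Submonoid.powers sff) sχ_units

lemma sψφ (r : sRng) : sψ (sφ r) = sχ r := IsLocalization.lift_eq sχ_units r

lemma sψ_inj : Function.Injective sψ := by
  refine (IsLocalization.lift_injective_iff (M := Submonoid.powers sff) (S := sLL) sχ_units).mpr ?_
  exact fun x y => ⟨fun h => congrArg sψ h |>.trans (sψφ y) |>.symm.trans (sψφ x) |>.symm ▸ rfl,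
    fun h => congrArg sφ (sχ_inj h)⟩

-- units
lemma sφ_ff_unit : IsUnit (sφ sff) :=
  IsLocalization.map_units (M := Submonoid.powers sff) sLL ⟨sff, Submonoid.mem_powers sff⟩

lemma sφ_ff_pow_unit (k : ℕ) : IsUnit (sφ (sff ^ k)) := by
  rw [map_pow]; exact sφ_ff_unit.pow k

lemma sφ_X_unit {i : Fin 6} (h : i = 2 ∨ i = 3 ∨ i = 4 ∨ i = 5) : IsUnit (sφ (X i)) := by
  have hdvd : X i ∣ sff := by
    rcases h with rfl | rfl | rfl | rfl
    · exact ⟨X 3 * X 4 * X 5, by rw [sff]; ring⟩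
    · exact ⟨X 2 * X 4 * X 5, by rw [sff]; ring⟩
    · exact ⟨X 2 * X 3 * X 5, by rw [sff]; ring⟩
    · exact ⟨X 2 * X 3 * X 4, by rw [sff]; ring⟩
  exact isUnit_of_dvd_unit (map_dvd _ hdvd) sφ_ff_unit

-- representation
lemma sLL_rep (x : sLL) : ∃ (r : sRng) (u : sLLˣ), x = sφ r * u := by
  obtain ⟨⟨r, s⟩, hrs⟩ := IsLocalization.surj (Submonoid.powers sff) x
  dsimp only at hrs
  have hu : IsUnit (sφ (s : sRng)) := IsLocalization.map_units sLL s
  refine ⟨r, hu.unit⁻¹, ?_⟩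
  rw [Units.eq_mul_inv_iff_mul_eq, IsUnit.unit_spec]
  exact hrs

lemma sdvd_down {r t : sRng} (h : sφ r ∣ sφ t) : ∃ k : ℕ, r ∣ t * sff ^ k := by
  obtain ⟨e, he⟩ := h
  obtain ⟨⟨w, s⟩, hws⟩ := IsLocalization.surj (Submonoid.powers sff) e
  dsimp only at hws
  have hws' : e * sφ (s : sRng) = sφ w := hws
  obtain ⟨k, hk⟩ := s.2
  have hk' : sff ^ k = (s : sRng) := hk
  refine ⟨k, ?_⟩
  have h5 : sφ (t * (s : sRng)) = sφ (r * w) := by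
    rw [map_mul, map_mul, he, mul_assoc, hws']
  have h6 := IsLocalization.injective sLL
    (powers_le_nonZeroDivisors_of_noZeroDivisors sff_ne) h5
  rw [← hk'] at h6
  exact ⟨w, h6⟩

instance : DecompositionMonoid sLL := by
  constructor
  intro x b c hx
  obtain ⟨r, u, rfl⟩ := sLL_rep x
  obtain ⟨s, v, rfl⟩ := sLL_rep b
  obtain ⟨t, w, rfl⟩ := sLL_rep c
  have h1 : sφ r ∣ sφ s * sφ t := by
    have : (sφ r * u) ∣ (sφ s * v) * (sφ t * w) := hx
    have h2 : sφ r ∣ (sφ s * v) * (sφ t * w) := (Units.mul_right_dvd).mp this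
    have : (sφ s * ↑v) * (sφ t * ↑w) = (sφ s * sφ t) * ↑(v * w) := by
      push_cast; ring
    rw [this] at h2
    exact (Units.dvd_mul_right).mp h2
  rw [← map_mul] at h1
  obtain ⟨k, hk⟩ := sdvd_down h1
  rw [mul_assoc] at hk
  obtain ⟨r1, r2, hr1, hr2, rfl⟩ := exists_dvd_and_dvd_of_dvd_mul hk
  refine ⟨sφ r1 * u, sφ r2, ?_, ?_, by rw [map_mul]; ring⟩
  · exact (Units.mul_right_dvd).mpr ((map_dvd _ hr1).trans (Dvd.intro _ rfl))
  · have : sφ r2 ∣ sφ t * sφ (sff ^ k) := by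
      rw [← map_mul]; exact map_dvd _ hr2
    have h3 : sφ r2 ∣ sφ t := by
      obtain ⟨uf, huf⟩ := sφ_ff_pow_unit (k := k)
      rw [← huf] at this
      exact (Units.dvd_mul_right).mp this
    exact h3.trans (Dvd.intro _ rfl)
lemma sφ_inj' : Function.Injective sφ :=
  IsLocalization.injective sLL (powers_le_nonZeroDivisors_of_noZeroDivisors sff_ne)

lemma sφ_ne_zero {r : sRng} (h : r ≠ 0) : sφ r ≠ 0 :=
  fun h0 => h (sφ_inj' (by simpa using h0))

lemma sprime_map {p : sRng} (hp : Prime p) (hu : ¬ IsUnit (sφ p)) : Prime (sφ p) := by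
  have hne : sφ p ≠ 0 := sφ_ne_zero hp.ne_zero
  rw [← Ideal.span_singleton_prime hne]
  have hspan : Ideal.span {sφ p} = Ideal.map sφ (Ideal.span {p}) := by
    rw [Ideal.map_span, Set.image_singleton]
  rw [hspan]
  refine IsLocalization.isPrime_of_isPrime_disjoint (Submonoid.powers sff) sLL _
    ((Ideal.span_singleton_prime hp.ne_zero).mpr hp) ?_
  rw [Set.disjoint_left]
  rintro x ⟨k, rfl⟩ hxs
  have hdvd : p ∣ sff ^ k := Ideal.mem_span_singleton.mp hxs
  exact hu (isUnit_of_dvd_unit (map_dvd _ hdvd) (sφ_ff_pow_unit k))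

lemma sexists_prime_dvd {d : sLL} (h0 : d ≠ 0) (hu : ¬ IsUnit d) :
    ∃ p : sLL, Prime p ∧ p ∣ d := by
  classical
  obtain ⟨r, u, rfl⟩ := sLL_rep d
  have hr : r ≠ 0 := by
    rintro rfl
    simp at h0
  have key : ∀ r : sRng, r ≠ 0 → IsUnit (sφ r) ∨ ∃ p : sLL, Prime p ∧ p ∣ sφ r := by
    intro r
    refine UniqueFactorizationMonoid.induction_on_prime r (by tauto) ?_ ?_
    · intro x hx _
      exact Or.inl (hx.map sφ)
    · intro a p ha hp ih _
      rcases Classical.em (IsUnit (sφ p)) with hup | hup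
      · rcases ih ha with h | ⟨q, hq, hqd⟩
        · exact Or.inl (by rw [map_mul]; exact hup.mul h)
        · exact Or.inr ⟨q, hq, by rw [map_mul]; exact hqd.mul_left _⟩
      · exact Or.inr ⟨sφ p, sprime_map hp hup, by rw [map_mul]; exact dvd_mul_right _ _⟩
  rcases key r hr with h | ⟨p, hp, hpd⟩
  · exact absurd (h.mul (u.isUnit)) hu
  · exact ⟨p, hp, hpd.mul_right _⟩

lemma sIsRelPrime_of {x y : sLL} (hx : x ≠ 0)
    (H : ∀ p : sLL, Prime p → p ∣ x → p ∣ y → False) : IsRelPrime x y := by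
  intro d hdx hdy
  by_contra hdu
  have hd0 : d ≠ 0 := fun h => hx (by rw [h] at hdx; exact zero_dvd_iff.mp hdx)
  obtain ⟨p, hp, hpd⟩ := sexists_prime_dvd hd0 hdu
  exact H p hp (hpd.trans hdx) (hpd.trans hdy)

lemma sprime_X0 : Prime (X 0 : sRng) := by
  refine (MulEquiv.prime_iff
    (MvPolynomial.finSuccEquiv ℤ 5).toRingEquiv.toMulEquiv).mp ?_
  show Prime ((MvPolynomial.finSuccEquiv ℤ 5) (X 0))
  rw [MvPolynomial.finSuccEquiv_X_zero]
  exact Polynomial.prime_X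

lemma sprime_X1 : Prime (X 1 : sRng) := by
  have h0 := (MulEquiv.prime_iff
    (MvPolynomial.renameEquiv ℤ (Equiv.swap (0 : Fin 6) 1)).toRingEquiv.toMulEquiv).mpr
    sprime_X0
  have h : ((MvPolynomial.renameEquiv ℤ (Equiv.swap (0 : Fin 6) 1)).toRingEquiv.toMulEquiv)
      (X 0) = X 1 := by
    show MvPolynomial.rename (⇑(Equiv.swap (0 : Fin 6) 1)) (X 0) = X 1
    rw [rename_X, Equiv.swap_apply_left]
  rwa [h] at h0

lemma sX0_not_dvd_X1 : ¬ ((X 0 : sRng) ∣ X 1) := by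
  rintro ⟨c, hc⟩
  have := congrArg (MvPolynomial.eval (fun i : Fin 6 => if i = 0 then 0 else 1)) hc
  simp at this

lemma sab_relprime : IsRelPrime (sφ (X 0)) (sφ (X 1)) := by
  refine sIsRelPrime_of (sφ_ne_zero (X_ne_zero _)) ?_
  intro p hp hp0 hp1
  obtain ⟨r, u, rfl⟩ := sLL_rep p
  have hr0 : sφ r ∣ sφ (X 0) := (Units.mul_right_dvd).mp hp0
  have hr1 : sφ r ∣ sφ (X 1) := (Units.mul_right_dvd).mp hp1
  obtain ⟨k, hk⟩ := sdvd_down hr0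
  obtain ⟨m, hm⟩ := sdvd_down hr1
  have key : ∀ r : sRng, r ∣ X 0 * sff ^ k → r ∣ X 1 * sff ^ m → IsUnit (sφ r) := by
    intro r
    refine UniqueFactorizationMonoid.induction_on_prime r ?_ ?_ ?_
    · intro h0 _
      exact absurd (zero_dvd_iff.mp h0)
        (mul_ne_zero (X_ne_zero _) (pow_ne_zero _ sff_ne))
    · intro x hx _ _
      exact hx.map sφ
    · intro a q ha hq ih h0 h1
      rw [map_mul]
      have hq0 := (dvd_mul_right q a).trans h0
      have hq1 := (dvd_mul_right q a).trans h1
      have ha0 := ((dvd_mul_left a q).trans h0)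
      have ha1 := ((dvd_mul_left a q).trans h1)
      refine IsUnit.mul ?_ (ih ha0 ha1)
      rcases hq.dvd_mul.mp hq0 with h | h
      · rcases hq.dvd_mul.mp hq1 with h' | h'
        · exfalso
          have : Associated q (X 0) := (hq.dvd_prime_iff_associated sprime_X0).mp h
          exact sX0_not_dvd_X1 (this.symm.dvd.trans h')
        · exact isUnit_of_dvd_unit (map_dvd _ h') (sφ_ff_pow_unit m)
      · exact isUnit_of_dvd_unit (map_dvd _ h) (sφ_ff_pow_unit k)
  exact hp.not_unit ((key r hk hm).mul u.isUnit)

section SomosCore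

structure sW4 (c d e f : sLL) : Prop where
  p12 : IsRelPrime c d
  p13 : IsRelPrime c e
  p14 : IsRelPrime c f
  p23 : IsRelPrime d e
  p24 : IsRelPrime d f
  p34 : IsRelPrime e f
  a1 : IsRelPrime c (sφ (X 0))
  a2 : IsRelPrime d (sφ (X 0))
  a3 : IsRelPrime e (sφ (X 0))
  a4 : IsRelPrime f (sφ (X 0))
  b1 : IsRelPrime c (sφ (X 1))
  b2 : IsRelPrime d (sφ (X 1))
  b3 : IsRelPrime e (sφ (X 1))
  b4 : IsRelPrime f (sφ (X 1))

lemma sW4.ofUnits {c d e f : sLL} (u1 : IsUnit c) (u2 : IsUnit d) (u3 : IsUnit e)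
    (u4 : IsUnit f) : sW4 c d e f :=
  ⟨u1.isRelPrime_left, u1.isRelPrime_left, u1.isRelPrime_left, u2.isRelPrime_left,
   u2.isRelPrime_left, u3.isRelPrime_left, u1.isRelPrime_left, u2.isRelPrime_left,
   u3.isRelPrime_left, u4.isRelPrime_left, u1.isRelPrime_left, u2.isRelPrime_left,
   u3.isRelPrime_left, u4.isRelPrime_left⟩

lemma sW4.next {c d e f q : sLL} (w : sW4 c d e f) (hq : q ≠ 0)
    (hrel : q * c = sφ (X 0) * (f * d) + sφ (X 1) * e ^ 2) : sW4 d e f q := by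
  have hqd : IsRelPrime q d := by
    refine sIsRelPrime_of hq ?_
    intro p hp h1 h2
    have h4 : p ∣ sφ (X 1) * e ^ 2 := by
      have h5 := dvd_sub (h1.mul_right c) (Dvd.dvd.mul_left (h2.mul_left f) (sφ (X 0)))
      rwa [hrel, add_sub_cancel_left] at h5
    rcases hp.dvd_mul.mp h4 with h | h
    · exact hp.not_unit (w.b2 h2 h)
    · exact hp.not_unit (w.p23 h2 (hp.dvd_of_dvd_pow h))
  have hqe : IsRelPrime q e := by
    refine sIsRelPrime_of hq ?_
    intro p hp h1 h2
    have h4 : p ∣ sφ (X 0) * (f * d) := by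
      have h5 := dvd_sub (h1.mul_right c)
        (Dvd.dvd.mul_left (dvd_pow h2 two_ne_zero) (sφ (X 1)))
      rwa [hrel, add_sub_cancel_right] at h5
    rcases hp.dvd_mul.mp h4 with h | h
    · exact hp.not_unit (w.a3 h2 h)
    · rcases hp.dvd_mul.mp h with h' | h'
      · exact hp.not_unit (w.p34 h2 h')
      · exact hp.not_unit (w.p23 h' h2)
  have hqf : IsRelPrime q f := by
    refine sIsRelPrime_of hq ?_
    intro p hp h1 h2
    have h4 : p ∣ sφ (X 1) * e ^ 2 := by
      have h5 := dvd_sub (h1.mul_right c) (Dvd.dvd.mul_left (h2.mul_right d) (sφ (X 0)))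
      rwa [hrel, add_sub_cancel_left] at h5
    rcases hp.dvd_mul.mp h4 with h | h
    · exact hp.not_unit (w.b4 h2 h)
    · exact hp.not_unit (w.p34 (hp.dvd_of_dvd_pow h) h2)
  have hqa : IsRelPrime q (sφ (X 0)) := by
    refine sIsRelPrime_of hq ?_
    intro p hp h1 h2
    have h4 : p ∣ sφ (X 1) * e ^ 2 := by
      have h5 := dvd_sub (h1.mul_right c) (h2.mul_right (f * d))
      rwa [hrel, add_sub_cancel_left] at h5
    rcases hp.dvd_mul.mp h4 with h | h
    · exact hp.not_unit (sab_relprime h2 h)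
    · exact hp.not_unit (w.a3 (hp.dvd_of_dvd_pow h) h2)
  have hqb : IsRelPrime q (sφ (X 1)) := by
    refine sIsRelPrime_of hq ?_
    intro p hp h1 h2
    have h4 : p ∣ sφ (X 0) * (f * d) := by
      have h5 := dvd_sub (h1.mul_right c) (h2.mul_right (e ^ 2))
      rwa [hrel, add_sub_cancel_right] at h5
    rcases hp.dvd_mul.mp h4 with h | h
    · exact hp.not_unit (sab_relprime h h2)
    · rcases hp.dvd_mul.mp h with h' | h'
      · exact hp.not_unit (w.b4 h' h2)
      · exact hp.not_unit (w.b2 h' h2)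
  exact ⟨w.p23, w.p24, hqd.symm, w.p34, hqe.symm, hqf.symm, w.a2, w.a3, w.a4, hqa,
    w.b2, w.b3, w.b4, hqb⟩

variable (A : ℤ → sKK) (hA : ∀ n : ℤ, A n ≠ 0)
  (hrec : ∀ n : ℤ,
    A (n + 4) * A n = sχ (X 0) * (A (n + 3) * A (n + 1)) + sχ (X 1) * A (n + 2) ^ 2)

include hrec in
lemma srecL (n : ℤ) {c d e f q : sLL} (hc : A n = sψ c) (hd : A (n + 1) = sψ d)
    (he : A (n + 2) = sψ e) (hf : A (n + 3) = sψ f) (hq : A (n + 4) = sψ q) :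
    q * c = sφ (X 0) * (f * d) + sφ (X 1) * e ^ 2 := by
  apply sψ_inj
  simp only [map_add, map_mul, map_pow, sψφ]
  rw [← hc, ← hd, ← he, ← hf, ← hq]
  exact hrec n

include hA hrec in
lemma sunit_next (n : ℤ) {c d e f : sLL} (hc : A n = sψ c) (hd : A (n + 1) = sψ d)
    (he : A (n + 2) = sψ e) (hf : A (n + 3) = sψ f) (hu : IsUnit c) :
    ∃ q, A (n + 4) = sψ q := by
  obtain ⟨v, hv⟩ := hu
  refine ⟨↑v⁻¹ * (sφ (X 0) * (f * d) + sφ (X 1) * e ^ 2), ?_⟩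
  apply mul_right_cancel₀ (hA n)
  have h9 : (↑v⁻¹ * (sφ (X 0) * (f * d) + sφ (X 1) * e ^ 2)) * ↑v
      = sφ (X 0) * (f * d) + sφ (X 1) * e ^ 2 := by
    rw [mul_comm (↑v⁻¹ : sLL), mul_assoc]
    simp
  rw [hrec n, hc, hd, he, hf, ← hv,
    ← map_mul sψ (↑v⁻¹ * (sφ (X 0) * (f * d) + sφ (X 1) * e ^ 2)) (↑v : sLL), h9]
  simp only [map_add, map_mul, map_pow, sψφ]

include hA hrec in
lemma sdiv_next (n : ℤ) {t0 t1 t2 t3 t4 t5 t6 t7 : sLL}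
    (h0 : A n = sψ t0) (h1 : A (n + 1) = sψ t1) (h2 : A (n + 2) = sψ t2)
    (h3 : A (n + 3) = sψ t3) (h4 : A (n + 4) = sψ t4) (h5 : A (n + 5) = sψ t5)
    (h6 : A (n + 6) = sψ t6) (h7 : A (n + 7) = sψ t7)
    (c1 : IsRelPrime t4 t1) (c2 : IsRelPrime t4 t2) (c3 : IsRelPrime t4 t3) :
    ∃ q, A (n + 8) = sψ q := by
  have e2 : A (n + 1 + 1) = sψ t2 := by rw [show n + 1 + 1 = n + 2 by ring]; exact h2
  have e3 : A (n + 1 + 2) = sψ t3 := by rw [show n + 1 + 2 = n + 3 by ring]; exact h3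
  have e4 : A (n + 1 + 3) = sψ t4 := by rw [show n + 1 + 3 = n + 4 by ring]; exact h4
  have e5 : A (n + 1 + 4) = sψ t5 := by rw [show n + 1 + 4 = n + 5 by ring]; exact h5
  have f3 : A (n + 2 + 1) = sψ t3 := by rw [show n + 2 + 1 = n + 3 by ring]; exact h3
  have f4 : A (n + 2 + 2) = sψ t4 := by rw [show n + 2 + 2 = n + 4 by ring]; exact h4
  have f5 : A (n + 2 + 3) = sψ t5 := by rw [show n + 2 + 3 = n + 5 by ring]; exact h5
  have f6 : A (n + 2 + 4) = sψ t6 := by rw [show n + 2 + 4 = n + 6 by ring]; exact h6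
  have g4 : A (n + 3 + 1) = sψ t4 := by rw [show n + 3 + 1 = n + 4 by ring]; exact h4
  have g5 : A (n + 3 + 2) = sψ t5 := by rw [show n + 3 + 2 = n + 5 by ring]; exact h5
  have g6 : A (n + 3 + 3) = sψ t6 := by rw [show n + 3 + 3 = n + 6 by ring]; exact h6
  have g7 : A (n + 3 + 4) = sψ t7 := by rw [show n + 3 + 4 = n + 7 by ring]; exact h7
  have r0 := srecL A hrec n h0 h1 h2 h3 h4
  have r1 := srecL A hrec (n + 1) h1 e2 e3 e4 e5
  have r2 := srecL A hrec (n + 2) h2 f3 f4 f5 f6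
  have r3 := srecL A hrec (n + 3) h3 g4 g5 g6 g7
  have hdvd : t4 ∣ t1 ^ 3 * (t2 ^ 2 * (t3 * (sφ (X 0) * (t7 * t5) + sφ (X 1) * t6 ^ 2))) := by
    refine ⟨sφ (MvPolynomial.X 1) ^ 3 * t1 ^ 3 * t3 * t4 ^ 3 + 2 * sφ (MvPolynomial.X 0) * sφ (MvPolynomial.X 1) ^ 3 * t1 ^ 2 * t3 ^ 4 * t4 + sφ (MvPolynomial.X 0) * sφ (MvPolynomial.X 1) ^ 3 * t0 * t3 ^ 6 + 3 * sφ (MvPolynomial.X 0) ^ 2 * sφ (MvPolynomial.X 1) ^ 2 * t1 ^ 2 * t2 * t3 ^ 2 * t4 ^ 2 + 3 * sφ (MvPolynomial.X 0) ^ 2 * sφ (MvPolynomial.X 1) ^ 3 * t2 ^ 3 * t3 ^ 4 + sφ (MvPolynomial.X 0) ^ 3 * sφ (MvPolynomial.X 1) * t1 ^ 2 * t2 ^ 2 * t4 ^ 3 + 3 * sφ (MvPolynomial.X 0) ^ 3 * sφ (MvPolynomial.X 1) ^ 2 * t2 ^ 4 * t3 ^ 2 * t4 + 3 * sφ (MvPolynomial.X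 0) ^ 3 * sφ (MvPolynomial.X 1) ^ 2 * t1 * t2 * t3 ^ 5 + sφ (MvPolynomial.X 0) ^ 4 * sφ (MvPolynomial.X 1) * t2 ^ 5 * t4 ^ 2 + 3 * sφ (MvPolynomial.X 0) ^ 4 * sφ (MvPolynomial.X 1) * t1 * t2 ^ 2 * t3 ^ 3 * t4 + sφ (MvPolynomial.X 0) ^ 5 * t1 * t2 ^ 3 * t3 * t4 ^ 2, ?_⟩
    linear_combination (sφ (MvPolynomial.X 0) * t1 ^ 3 * t2 ^ 2 * t5) * r3 + (sφ (MvPolynomial.X 1) * t1 ^ 3 * t2 * t3 * t6 + sφ (MvPolynomial.X 1) ^ 2 * t1 ^ 3 * t3 * t4 ^ 2 + sφ (MvPolynomial.X 0) * sφ (MvPolynomial.X 1) * t1 ^ 3 * t3 ^ 2 * t5 + sφ (MvPolynomial.X 0) ^ 2 * t1 ^ 3 * t2 * t4 * t5) * r2 + (sφ (MvPolynomial.X 0) * sφ (MvPolynomial.X 1) * t1 ^ 2 * t2 ^ 2 * t5 ^ 2 + sφ (MvPolynomial.X 0) * sφ (MvPolynomial.X 1) ^ 2 * t1 * t2 ^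 2 * t3 ^ 2 * t5 + 2 * sφ (MvPolynomial.X 0) * sφ (MvPolynomial.X 1) ^ 2 * t1 ^ 2 * t3 ^ 2 * t4 ^ 2 + sφ (MvPolynomial.X 0) * sφ (MvPolynomial.X 1) ^ 3 * t2 ^ 2 * t3 ^ 4 + sφ (MvPolynomial.X 0) ^ 2 * sφ (MvPolynomial.X 1) * t1 * t2 ^ 3 * t4 * t5 + sφ (MvPolynomial.X 0) ^ 2 * sφ (MvPolynomial.X 1) * t1 ^ 2 * t3 ^ 3 * t5 + sφ (MvPolynomial.X 0) ^ 2 * sφ (MvPolynomial.X 1) * t1 ^ 2 * t2 * t4 ^ 3 + 2 * sφ (MvPolynomial.X 0) ^ 2 * sφ (MvPolynomial.X 1) ^ 2 * t2 ^ 3 * t3 ^ 2 * t4 + sφ (MvPolynomial.X 0) ^ 2 * sφ (MvPolynomial.X 1) ^ 2 * t1 * t3 ^ 5 + sφ (MvPolynomial.X 0) ^ 3 * t1 ^ 2 * t2 * t3 * t4 * t5 + sφ (MvPolynomial.X 0) ^ 3 * sφ (MvPolynomial.X 1) * t2 ^ 4 * t4 ^ 2 + 2 * sφ (MvPolynomial.X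 0) ^ 3 * sφ (MvPolynomial.X 1) * t1 * t2 * t3 ^ 3 * t4 + sφ (MvPolynomial.X 0) ^ 4 * t1 * t2 ^ 2 * t3 * t4 ^ 2) * r1 - (sφ (MvPolynomial.X 0) * sφ (MvPolynomial.X 1) ^ 3 * t3 ^ 6) * r0
  have hrp : IsRelPrime t4 (t1 ^ 3 * (t2 ^ 2 * t3)) :=
    (c1.pow_right).mul_right ((c2.pow_right).mul_right c3)
  have hdvd2 : t4 ∣ (t1 ^ 3 * (t2 ^ 2 * t3)) * (sφ (X 0) * (t7 * t5) + sφ (X 1) * t6 ^ 2) := by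
    have heq : (t1 ^ 3 * (t2 ^ 2 * t3)) * (sφ (X 0) * (t7 * t5) + sφ (X 1) * t6 ^ 2)
        = t1 ^ 3 * (t2 ^ 2 * (t3 * (sφ (X 0) * (t7 * t5) + sφ (X 1) * t6 ^ 2))) := by ring
    rw [heq]; exact hdvd
  obtain ⟨q, hq⟩ := hrp.dvd_of_dvd_mul_left hdvd2
  refine ⟨q, ?_⟩
  have h' := hrec (n + 4)
  rw [show n + 4 + 4 = n + 8 by ring, show n + 4 + 3 = n + 7 by ring,
    show n + 4 + 1 = n + 5 by ring, show n + 4 + 2 = n + 6 by ring] at h'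
  rw [h5, h6, h7, h4] at h'
  have hR : sχ (X 0) * (sψ t7 * sψ t5) + sχ (X 1) * sψ t6 ^ 2 = sψ t4 * sψ q := by
    rw [← map_mul sψ t4 q, ← hq]
    simp only [map_add, map_mul, map_pow, sψφ]
  rw [hR] at h'
  have ht4 : sψ t4 ≠ 0 := h4 ▸ hA (n + 4)
  apply mul_right_cancel₀ ht4
  rw [h', mul_comm]

end SomosCore

section SomosWin

variable (A : ℤ → sKK)

structure sWin (n : ℤ) (t0 t1 t2 t3 t4 t5 t6 t7 : sLL) : Prop where
  h0 : A n = sψ t0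
  h1 : A (n + 1) = sψ t1
  h2 : A (n + 2) = sψ t2
  h3 : A (n + 3) = sψ t3
  h4 : A (n + 4) = sψ t4
  h5 : A (n + 5) = sψ t5
  h6 : A (n + 6) = sψ t6
  h7 : A (n + 7) = sψ t7
  w0 : sW4 t0 t1 t2 t3
  w1 : sW4 t1 t2 t3 t4
  w2 : sW4 t2 t3 t4 t5
  w3 : sW4 t3 t4 t5 t6
  w4 : sW4 t4 t5 t6 t7

variable (hA : ∀ n : ℤ, A n ≠ 0)
  (hrec : ∀ n : ℤ,
    A (n + 4) * A n = sχ (X 0) * (A (n + 3) * A (n + 1)) + sχ (X 1) * A (n + 2) ^ 2)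

include hA hrec in
lemma sstep {n : ℤ} {t0 t1 t2 t3 t4 t5 t6 t7 : sLL} (W : sWin A n t0 t1 t2 t3 t4 t5 t6 t7) :
    ∃ q, sWin A (n + 1) t1 t2 t3 t4 t5 t6 t7 q := by
  obtain ⟨q, hq⟩ := sdiv_next A hA hrec n W.h0 W.h1 W.h2 W.h3 W.h4 W.h5 W.h6 W.h7
    W.w1.p14.symm W.w1.p24.symm W.w1.p34.symm
  have hq0 : q ≠ 0 := by
    intro h
    exact hA (n + 8) (by rw [hq, h, map_zero])
  have m5 : A (n + 4 + 1) = sψ t5 := by rw [show n + 4 + 1 = n + 5 by ring]; exact W.h5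
  have m6 : A (n + 4 + 2) = sψ t6 := by rw [show n + 4 + 2 = n + 6 by ring]; exact W.h6
  have m7 : A (n + 4 + 3) = sψ t7 := by rw [show n + 4 + 3 = n + 7 by ring]; exact W.h7
  have m8 : A (n + 4 + 4) = sψ q := by rw [show n + 4 + 4 = n + 8 by ring]; exact hq
  have hrel := srecL A hrec (n + 4) W.h4 m5 m6 m7 m8
  refine ⟨q, ⟨W.h1, ?_, ?_, ?_, ?_, ?_, ?_, ?_, W.w1, W.w2, W.w3, W.w4,
    W.w4.next hq0 hrel⟩⟩
  · rw [show n + 1 + 1 = n + 2 by ring]; exact W.h2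
  · rw [show n + 1 + 2 = n + 3 by ring]; exact W.h3
  · rw [show n + 1 + 3 = n + 4 by ring]; exact W.h4
  · rw [show n + 1 + 4 = n + 5 by ring]; exact W.h5
  · rw [show n + 1 + 5 = n + 6 by ring]; exact W.h6
  · rw [show n + 1 + 6 = n + 7 by ring]; exact W.h7
  · rw [show n + 1 + 7 = n + 8 by ring]; exact hq

include hA hrec in
lemma sforward {e1 e2 e3 e4 : sLL} (u1 : IsUnit e1) (u2 : IsUnit e2) (u3 : IsUnit e3)
    (u4 : IsUnit e4) (m1 : A 1 = sψ e1) (m2 : A 2 = sψ e2) (m3 : A 3 = sψ e3)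
    (m4 : A 4 = sψ e4) : ∀ n : ℤ, 1 ≤ n → ∃ ℓ, A n = sψ ℓ := by
  have n2 : A (1 + 1) = sψ e2 := by norm_num [m2]
  have n3 : A (1 + 2) = sψ e3 := by norm_num [m3]
  have n4 : A (1 + 3) = sψ e4 := by norm_num [m4]
  have p3 : A (2 + 1) = sψ e3 := by norm_num [m3]
  have p4 : A (2 + 2) = sψ e4 := by norm_num [m4]
  have q4 : A (3 + 1) = sψ e4 := by norm_num [m4]
  have w0 : sW4 e1 e2 e3 e4 := sW4.ofUnits u1 u2 u3 u4
  -- A 5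
  obtain ⟨q5, hq5⟩ := sunit_next A hA hrec 1 m1 n2 n3 n4 u1
  have hq50 : q5 ≠ 0 := fun h => hA (1 + 4) (by rw [hq5, h, map_zero])
  have w1 : sW4 e2 e3 e4 q5 := w0.next hq50 (srecL A hrec 1 m1 n2 n3 n4 hq5)
  have p5 : A (2 + 3) = sψ q5 := by
    rw [show (2 : ℤ) + 3 = 1 + 4 by norm_num]; exact hq5
  have q5' : A (3 + 2) = sψ q5 := by
    rw [show (3 : ℤ) + 2 = 1 + 4 by norm_num]; exact hq5
  have r5 : A (4 + 1) = sψ q5 := by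
    rw [show (4 : ℤ) + 1 = 1 + 4 by norm_num]; exact hq5
  -- A 6
  obtain ⟨q6, hq6⟩ := sunit_next A hA hrec 2 m2 p3 p4 p5 u2
  have hq60 : q6 ≠ 0 := fun h => hA (2 + 4) (by rw [hq6, h, map_zero])
  have w2 : sW4 e3 e4 q5 q6 := w1.next hq60 (srecL A hrec 2 m2 p3 p4 p5 hq6)
  have q6' : A (3 + 3) = sψ q6 := by
    rw [show (3 : ℤ) + 3 = 2 + 4 by norm_num]; exact hq6
  have r6 : A (4 + 2) = sψ q6 := by
    rw [show (4 : ℤ) + 2 = 2 + 4 by norm_num]; exact hq6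
  -- A 7
  obtain ⟨q7, hq7⟩ := sunit_next A hA hrec 3 m3 q4 q5' q6' u3
  have hq70 : q7 ≠ 0 := fun h => hA (3 + 4) (by rw [hq7, h, map_zero])
  have w3 : sW4 e4 q5 q6 q7 := w2.next hq70 (srecL A hrec 3 m3 q4 q5' q6' hq7)
  have r7 : A (4 + 3) = sψ q7 := by
    rw [show (4 : ℤ) + 3 = 3 + 4 by norm_num]; exact hq7
  -- A 8
  obtain ⟨q8, hq8⟩ := sunit_next A hA hrec 4 m4 r5 r6 r7 u4
  have hq80 : q8 ≠ 0 := fun h => hA (4 + 4) (by rw [hq8, h, map_zero])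
  have w4 : sW4 q5 q6 q7 q8 := w3.next hq80 (srecL A hrec 4 m4 r5 r6 r7 hq8)
  have base : sWin A 1 e1 e2 e3 e4 q5 q6 q7 q8 := by
    refine ⟨m1, n2, n3, n4, ?_, ?_, ?_, ?_, w0, w1, w2, w3, w4⟩
    · rw [show (1 : ℤ) + 4 = 1 + 4 by norm_num]; exact hq5
    · rw [show (1 : ℤ) + 5 = 2 + 4 by norm_num]; exact hq6
    · rw [show (1 : ℤ) + 6 = 3 + 4 by norm_num]; exact hq7
    · rw [show (1 : ℤ) + 7 = 4 + 4 by norm_num]; exact hq8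
  have key : ∀ m : ℕ, ∃ t0 t1 t2 t3 t4 t5 t6 t7 : sLL,
      sWin A (1 + (m : ℤ)) t0 t1 t2 t3 t4 t5 t6 t7 := by
    intro m
    induction m with
    | zero =>
      refine ⟨e1, e2, e3, e4, q5, q6, q7, q8, ?_⟩
      rw [show (1 + ((0 : ℕ) : ℤ)) = 1 by norm_num]
      exact base
    | succ k ih =>
      obtain ⟨t0, t1, t2, t3, t4, t5, t6, t7, W⟩ := ih
      obtain ⟨q, W'⟩ := sstep A hA hrec W
      refine ⟨t1, t2, t3, t4, t5, t6, t7, q, ?_⟩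
      rw [show (1 + ((k + 1 : ℕ) : ℤ)) = 1 + (k : ℤ) + 1 by push_cast; ring]
      exact W'
  intro n hn
  obtain ⟨t0, t1, t2, t3, t4, t5, t6, t7, W⟩ := key (n - 1).toNat
  have hW := W.h0
  rw [show (1 + ((n - 1).toNat : ℤ)) = n by rw [Int.toNat_of_nonneg (by omega)]; ring] at hW
  exact ⟨t0, hW⟩

end SomosWin

end Somos4Aux

/-- The images of the six indeterminates of `ℤ[a, b, x₁, x₂, x₃, x₄]` in its
field of fractions. -/
noncomputable def gen6 (i : Fin 6) : FractionRing (MvPolynomial (Fin 6) ℤ) :=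
  algebraMap (MvPolynomial (Fin 6) ℤ) (FractionRing (MvPolynomial (Fin 6) ℤ)) (MvPolynomial.X i)

lemma sgen_eq (i : Fin 6) : gen6 i = sχ (MvPolynomial.X i) := rfl

lemma spsi_mem (ℓ : sLL) : sψ ℓ ∈ Subring.closure
    {gen6 0, gen6 1, gen6 2, gen6 3, gen6 4, gen6 5,
      (gen6 2)⁻¹, (gen6 3)⁻¹, (gen6 4)⁻¹, (gen6 5)⁻¹} := by
  set S := Subring.closure
    {gen6 0, gen6 1, gen6 2, gen6 3, gen6 4, gen6 5,
      (gen6 2)⁻¹, (gen6 3)⁻¹, (gen6 4)⁻¹, (gen6 5)⁻¹} with hS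
  obtain ⟨⟨r, s⟩, hrs⟩ := IsLocalization.surj (Submonoid.powers sff) ℓ
  dsimp only at hrs
  obtain ⟨k, hk⟩ := s.2
  have hk' : sff ^ k = (s : sRng) := hk
  have h2 : ℓ * sφ (sff ^ k) = sφ r := by rw [hk']; exact hrs
  have h3 := congrArg sψ h2
  rw [map_mul, sψφ, sψφ] at h3
  have hffK : sχ sff ≠ 0 := fun h => sff_ne (sχ_inj (by simpa using h))
  have hrepr : sψ ℓ = sχ r * ((sχ sff)⁻¹) ^ k := by
    rw [inv_pow, eq_mul_inv_iff_mul_eq₀ (pow_ne_zero k hffK), ← map_pow]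
    exact h3
  have hXmem : ∀ i : Fin 6, sχ (MvPolynomial.X i) ∈ S := by
    intro i
    apply Subring.subset_closure
    rw [← sgen_eq]
    fin_cases i <;> simp
  have hrmem : ∀ r : sRng, sχ r ∈ S := by
    intro r
    induction r using MvPolynomial.induction_on with
    | C z =>
      rw [eq_intCast (MvPolynomial.C (σ := Fin 6)) z, map_intCast]
      exact intCast_mem S z
    | add p q hp hq => rw [map_add]; exact Subring.add_mem _ hp hq
    | mul_X p i hp => rw [map_mul]; exact Subring.mul_mem _ hp (hXmem i)
  have hffmem : (sχ sff)⁻¹ ∈ S := by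
    have he : sχ sff = gen6 2 * gen6 3 * gen6 4 * gen6 5 := by
      rw [show sff = MvPolynomial.X 2 * MvPolynomial.X 3 * MvPolynomial.X 4 * MvPolynomial.X 5
        from rfl, map_mul, map_mul, map_mul]
      rfl
    rw [he, mul_inv, mul_inv, mul_inv]
    refine Subring.mul_mem _ (Subring.mul_mem _ (Subring.mul_mem _ ?_ ?_) ?_) ?_ <;>
      exact Subring.subset_closure (by simp)
  rw [hrepr]
  exact Subring.mul_mem _ (hrmem r) (Subring.pow_mem _ hffmem k)

/-- The Laurent property for Somos 4 sequences: every term of the generic Somos 4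
sequence is a Laurent polynomial in the initial data with coefficients in `ℤ[α, β]`. -/
theorem somos4_laurent_property (A : ℤ → FractionRing (MvPolynomial (Fin 6) ℤ))
    (hA : ∀ n : ℤ, A n ≠ 0)
    (hrec : ∀ n : ℤ,
      A (n + 4) * A n = gen6 0 * (A (n + 3) * A (n + 1)) + gen6 1 * (A (n + 2)) ^ 2)
    (h1 : A 1 = gen6 2) (h2 : A 2 = gen6 3) (h3 : A 3 = gen6 4) (h4 : A 4 = gen6 5) :
    ∀ n : ℤ, A n ∈ Subring.closure
      {gen6 0, gen6 1, gen6 2, gen6 3, gen6 4, gen6 5,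
        (gen6 2)⁻¹, (gen6 3)⁻¹, (gen6 4)⁻¹, (gen6 5)⁻¹} := by
  have hrec' : ∀ n : ℤ,
      A (n + 4) * A n = sχ (MvPolynomial.X 0) * (A (n + 3) * A (n + 1))
        + sχ (MvPolynomial.X 1) * A (n + 2) ^ 2 := hrec
  intro n
  have main : ∃ ℓ : sLL, A n = sψ ℓ := by
    rcases le_or_gt 1 n with hn | hn
    · exact sforward A hA hrec'
        (sφ_X_unit (by norm_num)) (sφ_X_unit (by norm_num))
        (sφ_X_unit (by norm_num)) (sφ_X_unit (by norm_num))
        (h1.trans (sψφ _).symm) (h2.trans (sψφ _).symm)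
        (h3.trans (sψφ _).symm) (h4.trans (sψφ _).symm) n hn
    · set B : ℤ → sKK := fun m => A (5 - m) with hB
      have hB0 : ∀ m : ℤ, B m ≠ 0 := fun m => hA _
      have hrecB : ∀ m : ℤ,
          B (m + 4) * B m = sχ (MvPolynomial.X 0) * (B (m + 3) * B (m + 1))
            + sχ (MvPolynomial.X 1) * B (m + 2) ^ 2 := by
        intro m
        have h := hrec' (1 - m)
        rw [show 1 - m + 4 = 5 - m by ring, show 1 - m + 3 = 4 - m by ring,
          show 1 - m + 1 = 2 - m by ring, show 1 - m + 2 = 3 - m by ring] at h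
        show A (5 - (m + 4)) * A (5 - m) = sχ (MvPolynomial.X 0) * (A (5 - (m + 3)) * A (5 - (m + 1)))
          + sχ (MvPolynomial.X 1) * A (5 - (m + 2)) ^ 2
        rw [show (5 : ℤ) - (m + 4) = 1 - m by ring, show (5 : ℤ) - (m + 3) = 2 - m by ring,
          show (5 : ℤ) - (m + 1) = 4 - m by ring, show (5 : ℤ) - (m + 2) = 3 - m by ring]
        linear_combination h
      have b1 : B 1 = sψ (sφ (MvPolynomial.X 5)) := by
        show A (5 - 1) = _
        rw [show (5 : ℤ) - 1 = 4 by norm_num]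
        exact h4.trans (sψφ _).symm
      have b2 : B 2 = sψ (sφ (MvPolynomial.X 4)) := by
        show A (5 - 2) = _
        rw [show (5 : ℤ) - 2 = 3 by norm_num]
        exact h3.trans (sψφ _).symm
      have b3 : B 3 = sψ (sφ (MvPolynomial.X 3)) := by
        show A (5 - 3) = _
        rw [show (5 : ℤ) - 3 = 2 by norm_num]
        exact h2.trans (sψφ _).symm
      have b4 : B 4 = sψ (sφ (MvPolynomial.X 2)) := by
        show A (5 - 4) = _
        rw [show (5 : ℤ) - 4 = 1 by norm_num]
        exact h1.trans (sψφ _).symm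
      obtain ⟨ℓ, hℓ⟩ := sforward B hB0 hrecB
        (sφ_X_unit (by norm_num)) (sφ_X_unit (by norm_num))
        (sφ_X_unit (by norm_num)) (sφ_X_unit (by norm_num))
        b1 b2 b3 b4 (5 - n) (by omega)
      refine ⟨ℓ, ?_⟩
      have : A (5 - (5 - n)) = sψ ℓ := hℓ
      rwa [show (5 : ℤ) - (5 - n) = n by ring] at this
  obtain ⟨ℓ, hℓ⟩ := main
  rw [hℓ]
  exact spsi_mem ℓ
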